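/- N(φ) < ∞ if and only if all ratios of nonzero coordinates of φ in the computational basis lie in ℚ(i). Equivalently, some nonzero complex multiple of φ lies in BW_n iff φ is a ℂ*-multiple of a vector in ℚ(i)^{2^n}. -/

import Mathlib

/-- Generator `|x̃⟩` of the Barnes Wall lattice: the tensor product of `|0⟩`
(where `x i = false`) and `(1/(1+i))(|0⟩+|1⟩)` (where `x i = true`). -/
noncomputable def bwGen (n : ℕ) (x : Fin n → Bool) :
    EuclideanSpace ℂ (Fin n → Fin 2) :=
  WithLp.toLp 2 fun y => ∏ i : Fin n,
    (if x i then (1 + Complex.I)⁻¹ else if y i = 0 then 1 else 0)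

/-- Membership in the Barnes Wall lattice `BW_n`: the `ℤ[i]`-span of the `bwGen n x`. -/
def memBW (n : ℕ) (v : EuclideanSpace ℂ (Fin n → Fin 2)) : Prop :=
  ∃ a : (Fin n → Bool) → GaussianInt,
    v = ∑ x : Fin n → Bool, (GaussianInt.toComplex (a x)) • bwGen n x

open Complex

lemma one_add_I_ne : (1 + Complex.I) ≠ 0 := by
  intro h
  simpa using congrArg Complex.re h

lemma inv_one_add_I : (1 + Complex.I)⁻¹ = (1/2 : ℂ) - (1/2 : ℂ) * Complex.I := by
  refine inv_eq_of_mul_eq_one_right ?_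
  linear_combination (-(1:ℂ)/2) * Complex.I_mul_I

/-- The subring `ℚ + ℚ i` of `ℂ`. -/
def Qi : Subring ℂ where
  carrier := {z | ∃ p q : ℚ, z = (p : ℂ) + (q : ℂ) * Complex.I}
  mul_mem' := by
    rintro a b ⟨p, q, rfl⟩ ⟨p', q', rfl⟩
    refine ⟨p*p' - q*q', p*q' + q*p', ?_⟩
    push_cast
    linear_combination (q : ℂ) * (q' : ℂ) * Complex.I_mul_I
  one_mem' := ⟨1, 0, by simp⟩
  add_mem' := by
    rintro a b ⟨p, q, rfl⟩ ⟨p', q', rfl⟩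
    exact ⟨p + p', q + q', by push_cast; ring⟩
  zero_mem' := ⟨0, 0, by simp⟩
  neg_mem' := by
    rintro a ⟨p, q, rfl⟩
    exact ⟨-p, -q, by push_cast; ring⟩

lemma den_dvd_int (r : ℚ) (m : ℕ) (h : r.den ∣ m) : ∃ z : ℤ, (m : ℚ) * r = (z : ℚ) := by
  obtain ⟨k, hk⟩ := h
  refine ⟨k * r.num, ?_⟩
  have hd : (r.den : ℚ) ≠ 0 := by exact_mod_cast r.den_nz
  have hden : (r.den : ℚ) * r = (r.num : ℚ) := by
    have h0 := Rat.num_div_den r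
    have : (r.den : ℚ) * ((r.num : ℚ) / (r.den : ℚ)) = (r.num : ℚ) := by
      rw [mul_comm, div_mul_cancel₀ _ hd]
    rw [h0] at this
    exact this
  rw [hk]
  push_cast
  calc ((r.den : ℚ) * (k : ℚ)) * r = (k : ℚ) * ((r.den : ℚ) * r) := by ring
    _ = (k : ℚ) * (r.num : ℚ) := by rw [hden]

/-- ℤ[i]-coefficient expressing basis vector `e_y` in terms of `bwGen`. -/
def bwCoef (n : ℕ) (y : Fin n → Fin 2) (x : Fin n → Bool) : GaussianInt :=
  ∏ i : Fin n, (if y i = 0 then (if x i then 0 else 1) else (if x i then ⟨1, 1⟩ else -1))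

lemma fin2_cases (t : Fin 2) : t = 0 ∨ t = 1 := by
  fin_cases t
  · exact Or.inl rfl
  · exact Or.inr rfl

lemma key (n : ℕ) (y y' : Fin n → Fin 2) :
    ∑ x : Fin n → Bool, (GaussianInt.toComplex (bwCoef n y x)) * bwGen n x y'
      = if y' = y then 1 else 0 := by
  have hsum : ∀ x : Fin n → Bool,
      (GaussianInt.toComplex (bwCoef n y x)) * bwGen n x y'
        = ∏ i : Fin n,
            ((GaussianInt.toComplex (if y i = 0 then (if x i then 0 else 1)
                else (if x i then ⟨1, 1⟩ else -1))) *
             (if x i then (1 + Complex.I)⁻¹ else if y' i = 0 then 1 else 0)) := by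
    intro x
    simp only [bwCoef, map_prod, bwGen, WithLp.ofLp_toLp]
    rw [← Finset.prod_mul_distrib]
  calc ∑ x : Fin n → Bool, (GaussianInt.toComplex (bwCoef n y x)) * bwGen n x y'
      = ∑ x : Fin n → Bool, ∏ i : Fin n,
            ((GaussianInt.toComplex (if y i = 0 then (if x i then 0 else 1)
                else (if x i then ⟨1, 1⟩ else -1))) *
             (if x i then (1 + Complex.I)⁻¹ else if y' i = 0 then 1 else 0)) :=
        Finset.sum_congr rfl fun x _ => hsum x
    _ = ∏ i : Fin n, ∑ b : Bool,
            ((GaussianInt.toComplex (if y i = 0 then (if b then 0 else 1)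
                else (if b then ⟨1, 1⟩ else -1))) *
             (if b then (1 + Complex.I)⁻¹ else if y' i = 0 then 1 else 0)) := by
        rw [Finset.prod_univ_sum]
        rw [Fintype.piFinset_univ]
    _ = ∏ i : Fin n, (if y' i = y i then 1 else 0) := by
        refine Finset.prod_congr rfl fun i _ => ?_
        rw [Fintype.sum_bool]
        rcases fin2_cases (y i) with hy | hy <;> rcases fin2_cases (y' i) with hy' | hy' <;>
          simp [hy, hy', GaussianInt.toComplex_def'] <;>
          field_simp [one_add_I_ne] <;>
          ring
    _ = if y' = y then 1 else 0 := by
        by_cases h : y' = y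
        · simp [h]
        · rw [if_neg h]
          obtain ⟨i, hi⟩ := Function.ne_iff.mp h
          exact Finset.prod_eq_zero (Finset.mem_univ i) (if_neg hi)

theorem stmt_14 (n : ℕ) (φ : EuclideanSpace ℂ (Fin n → Fin 2)) :
    (∃ c : ℂ, c ≠ 0 ∧ memBW n (c • φ)) ↔
      (∃ c : ℂ, c ≠ 0 ∧ ∀ y : Fin n → Fin 2,
        ∃ p q : ℚ, (c • φ) y = (p : ℂ) + (q : ℂ) * Complex.I) := by
  constructor
  · rintro ⟨c, hc, a, ha⟩
    refine ⟨c, hc, fun y => ?_⟩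
    have h1 : (c • φ) y = ∑ x : Fin n → Bool, GaussianInt.toComplex (a x) * bwGen n x y := by
      rw [ha]
      rw [show (∑ x : Fin n → Bool, GaussianInt.toComplex (a x) • bwGen n x) y
          = ∑ x : Fin n → Bool, (GaussianInt.toComplex (a x) • bwGen n x) y from
          by rw [WithLp.ofLp_sum, Finset.sum_apply]]
      simp [PiLp.smul_apply, smul_eq_mul]
    have hmem : (c • φ) y ∈ Qi := by
      rw [h1]
      refine Subring.sum_mem _ fun x _ => Subring.mul_mem _ ?_ ?_
      · exact ⟨(a x).re, (a x).im, by rw [GaussianInt.toComplex_def]; push_cast; ring⟩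
      · simp only [bwGen, WithLp.ofLp_toLp]
        refine Subring.prod_mem _ fun i _ => ?_
        by_cases hx : x i
        · simp only [hx, if_true]
          exact ⟨1/2, -(1/2), by rw [inv_one_add_I]; push_cast; ring⟩
        · simp only [hx, if_false]
          by_cases hy : y i = 0 <;> simp [hy, Subring.one_mem, Subring.zero_mem]
    exact hmem
  · rintro ⟨c, hc, h⟩
    choose p q hpq using h
    set d : ℕ := ∏ y : Fin n → Fin 2, ((p y).den * (q y).den) with hd
    have hdpos : 0 < d := Finset.prod_pos fun y _ => Nat.mul_pos (p y).pos (q y).pos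
    have hdvd1 : ∀ y, (p y).den ∣ d :=
      fun y => dvd_trans (Dvd.intro _ rfl) (Finset.dvd_prod_of_mem _ (Finset.mem_univ y))
    have hdvd2 : ∀ y, (q y).den ∣ d :=
      fun y => dvd_trans (Dvd.intro_left _ rfl) (Finset.dvd_prod_of_mem _ (Finset.mem_univ y))
    choose z1 hz1 using fun y => den_dvd_int (p y) d (hdvd1 y)
    choose z2 hz2 using fun y => den_dvd_int (q y) d (hdvd2 y)
    set g : (Fin n → Fin 2) → GaussianInt := fun y => ⟨z1 y, z2 y⟩ with hg
    have hgval : ∀ y, GaussianInt.toComplex (g y) = (d : ℂ) * ((c • φ) y) := by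
      intro y
      rw [hpq y, hg]
      rw [GaussianInt.toComplex_def']
      have e1 : ((z1 y : ℚ) : ℂ) = ((d : ℚ) : ℂ) * ((p y : ℚ) : ℂ) := by
        exact_mod_cast congrArg (fun r : ℚ => (r : ℂ)) (hz1 y).symm
      have e2 : ((z2 y : ℚ) : ℂ) = ((d : ℚ) : ℂ) * ((q y : ℚ) : ℂ) := by
        exact_mod_cast congrArg (fun r : ℚ => (r : ℂ)) (hz2 y).symm
      push_cast at e1 e2 ⊢
      rw [e1, e2]
      ring
    refine ⟨(d : ℂ) * c, mul_ne_zero (by exact_mod_cast hdpos.ne') hc, ?_⟩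
    refine ⟨fun x => ∑ y : Fin n → Fin 2, g y * bwCoef n y x, ?_⟩
    ext y'
    have rhs : (∑ x : Fin n → Bool,
        (GaussianInt.toComplex (∑ y : Fin n → Fin 2, g y * bwCoef n y x)) • bwGen n x) y'
        = ∑ x : Fin n → Bool,
            (GaussianInt.toComplex (∑ y : Fin n → Fin 2, g y * bwCoef n y x)) * bwGen n x y' := by
      rw [show (∑ x : Fin n → Bool,
          (GaussianInt.toComplex (∑ y : Fin n → Fin 2, g y * bwCoef n y x)) • bwGen n x) y'
          = ∑ x : Fin n → Bool,
            ((GaussianInt.toComplex (∑ y : Fin n → Fin 2, g y * bwCoef n y x)) • bwGen n x) y' from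
          by rw [WithLp.ofLp_sum, Finset.sum_apply]]
      simp [PiLp.smul_apply, smul_eq_mul]
    rw [rhs]
    have hswap : ∑ x : Fin n → Bool,
            (GaussianInt.toComplex (∑ y : Fin n → Fin 2, g y * bwCoef n y x)) * bwGen n x y'
        = ∑ y : Fin n → Fin 2, GaussianInt.toComplex (g y) *
            (∑ x : Fin n → Bool, GaussianInt.toComplex (bwCoef n y x) * bwGen n x y') := by
      simp only [map_sum, map_mul, Finset.sum_mul, Finset.mul_sum]
      rw [Finset.sum_comm]
      exact Finset.sum_congr rfl fun y _ => Finset.sum_congr rfl fun x _ => by ring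
    rw [hswap]
    simp only [key, mul_ite, mul_one, mul_zero, Finset.sum_ite_eq, Finset.mem_univ, if_true]
    rw [hgval y']
    simp only [PiLp.smul_apply, smul_eq_mul]
    ring
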